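/- For all natural numbers n and k, the classical Stirling numbers of the second kind and the higher-order Bernoulli numbers of negative order satisfy Gessel's relation S(n+k, n) = C(n+k, k) · B_k^{(-n)}, where C(n+k,k) is the ordinary binomial coefficient. -/

import Mathlib

open Finset

/-- The classical Stirling numbers of the second kind, defined by the recurrence
`S(n+1,k) = S(n,k-1) + k·S(n,k)`, with `S(0,0) = 1`, `S(n,0) = 0` for `n ≥ 1`,
and `S(n,k) = 0` for `k > n`. -/
def stirling2 : ℕ → ℕ → ℕ
  | 0, 0 => 1
  | 0, _ + 1 => 0
  | _ + 1, 0 => 0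
  | n + 1, k + 1 => stirling2 n k + (k + 1) * stirling2 n (k + 1)

/-- The higher-order Bernoulli numbers of negative order `B_k^{(-n)}`, defined by the formal
exponential generating function `∑_{j≥0} B_j^{(-n)} t^j/j! = ((e^t - 1)/t)^n`, i.e. the
`n`-th power of the formal power series `∑_{m≥0} t^m/(m+1)!`. -/
noncomputable def bernoulliNegOrder (n k : ℕ) : ℚ :=
  (k.factorial : ℚ) *
    PowerSeries.coeff k ((PowerSeries.mk fun m => (1 : ℚ) / (m + 1).factorial) ^ n)

open PowerSeries in
/-- The exponential generating function `e^t - 1`. -/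
noncomputable def gesselG : PowerSeries ℚ :=
  PowerSeries.mk fun m => if m = 0 then 0 else 1 / m.factorial

open PowerSeries in
lemma gesselG_deriv : d⁄dX ℚ gesselG = 1 + gesselG := by
  ext m
  rw [coeff_derivative, gesselG, coeff_mk, map_add, coeff_mk]
  rcases m with _ | m
  · simp
  · have h1 : ((m + 1 + 1 : ℕ) : ℚ) ≠ 0 := by positivity
    simp only [Nat.succ_ne_zero, if_neg, Nat.factorial_succ, coeff_one, Nat.add_eq_zero]
    rw [if_neg (by simp)]
    push_cast
    field_simp
    ring

open PowerSeries in
lemma coeff_gesselG_pow (m : ℕ) : ∀ n : ℕ,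
    coeff m (gesselG ^ n) = (n.factorial : ℚ) * stirling2 m n / m.factorial := by
  induction m with
  | zero =>
    intro n
    rcases n with _ | n
    · simp [stirling2]
    · have hc : constantCoeff gesselG = 0 := by
        rw [gesselG, ← coeff_zero_eq_constantCoeff, coeff_mk]; simp
      rw [coeff_zero_eq_constantCoeff, map_pow, hc, zero_pow (Nat.succ_ne_zero n)]
      simp [stirling2]
  | succ m ih =>
    intro n
    rcases n with _ | n
    · simp [stirling2]
    · have hd : d⁄dX ℚ (gesselG ^ (n + 1)) =
          (n + 1) • (gesselG ^ n + gesselG ^ (n + 1)) := by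
        rw [Derivation.leibniz_pow, gesselG_deriv, Nat.add_sub_cancel, smul_eq_mul,
          mul_add, mul_one, ← pow_succ]
      have hc := congrArg (coeff m) hd
      rw [coeff_derivative, map_nsmul, map_add, ih n, ih (n + 1), nsmul_eq_mul] at hc
      push_cast at hc
      have hm1 : ((m : ℚ) + 1) ≠ 0 := by positivity
      have hmf : ((m.factorial : ℚ)) ≠ 0 := by
        exact_mod_cast Nat.factorial_ne_zero m
      have key : coeff (m + 1) (gesselG ^ (n + 1)) =
          ((n : ℚ) + 1) * ((n.factorial : ℚ) * stirling2 m n / m.factorial +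
            ((n + 1).factorial : ℚ) * stirling2 m (n + 1) / m.factorial) / ((m : ℚ) + 1) := by
        field_simp at hc ⊢
        linarith [hc]
      rw [key]
      have hs : (stirling2 (m + 1) (n + 1) : ℚ) =
          (stirling2 m n : ℚ) + ((n : ℚ) + 1) * stirling2 m (n + 1) := by
        rw [show stirling2 (m + 1) (n + 1) = stirling2 m n + (n + 1) * stirling2 m (n + 1)
          from rfl]
        push_cast; ring
      rw [hs, Nat.factorial_succ m, Nat.factorial_succ n]
      push_cast
      field_simp

open PowerSeries in
lemma gesselG_eq : (X : PowerSeries ℚ) * PowerSeries.mk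
    (fun m => (1 : ℚ) / (m + 1).factorial) = gesselG := by
  ext m
  rcases m with _ | m
  · simp [gesselG]
  · rw [coeff_succ_X_mul, coeff_mk, gesselG, coeff_mk, if_neg (Nat.succ_ne_zero m)]

theorem stirling2_eq_choose_mul_bernoulliNegOrder (n k : ℕ) :
    (stirling2 (n + k) n : ℚ) = ((n + k).choose k : ℚ) * bernoulliNegOrder n k := by
  have h1 : PowerSeries.coeff k
      ((PowerSeries.mk fun m => (1 : ℚ) / (m + 1).factorial) ^ n) =
      PowerSeries.coeff (k + n) (gesselG ^ n) := by
    rw [← gesselG_eq, mul_pow, PowerSeries.coeff_X_pow_mul]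
  have h2 := coeff_gesselG_pow (k + n) n
  have hch : ((n + k).choose k * k.factorial * n.factorial : ℕ) = (n + k).factorial := by
    have := Nat.choose_mul_factorial_mul_factorial (Nat.le_add_left k n)
    simpa [Nat.add_sub_cancel] using this
  have hfac : ((n + k).factorial : ℚ) ≠ 0 := by exact_mod_cast Nat.factorial_ne_zero _
  rw [bernoulliNegOrder, h1, h2]
  rw [show k + n = n + k from Nat.add_comm k n]
  field_simp
  calc (stirling2 (n + k) n : ℚ) * (n + k).factorial
      = ((n + k).choose k * k.factorial * n.factorial : ℕ) * stirling2 (n + k) n := by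
        rw [hch]; ring
    _ = _ := by push_cast; ring
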